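/- arXiv:2308.05167 — 2 statements merged into one kernel-verified Lean document; each statement's English description precedes it below -/
import Mathlib

section
/- Theorem (explicit formula for M). Suppose a_i = Σ_{S ⊆ Fin ℓ, |S| = i} (∏_{j ∈ S} α j) · (∏_{j ∉ S} β j) for 0 ≤ i ≤ ℓ, where α, β : Fin ℓ → R. Then for all n, k ∈ ℕ: if n < t·k then M n k = 0, and if n ≥ t·k then M n k = Σ over all c : Fin ℓ → ℕ with c j ≤ k for every j and Σ_j c j ≤ n − t·k, of choose(k + i, i) · γ^i · ∏_{j} choose(k, c j) · (α j)^(c j) · (β j)^(k − c j), where i = n − t·k − Σ_j c j and choose denotes the binomial coefficient. -/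
open Finset

/-- The weighted lattice-path matrix `M`:
`M n 0 = ∏_{i=1}^n b i`, `M n k = 0` for `k ≥ 1` and `n < t`, and
`M n k = Σ_{i=0}^{ℓ} (a n i) * M (n-t-i) (k-1) + (b n) * M (n-1) k`
for `n ≥ t`, `k ≥ 1`, where summands with a negative first index vanish. -/
def latticeM {R : Type*} [CommRing R] (t ℓ : ℕ) (a : ℕ → ℕ → R) (b : ℕ → R) :
    ℕ → ℕ → R
  | n, 0 => ∏ i ∈ Finset.Icc 1 n, b i
  | 0, k + 1 => if t = 0 then a 0 0 * latticeM t ℓ a b 0 k else 0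
  | n + 1, k + 1 =>
      if n + 1 < t then 0
      else (∑ i ∈ Finset.range (ℓ + 1),
              if t + i ≤ n + 1 then a (n + 1) i * latticeM t ℓ a b (n + 1 - t - i) k
              else 0)
        + b (n + 1) * latticeM t ℓ a b n (k + 1)
  termination_by n k => (k, n)

namespace LatticeAux
variable {R : Type*} [CommRing R]

def lF {ℓ : ℕ} (γ : R) (α β : Fin ℓ → R) (k m : ℕ) : R :=
  ∑ c ∈ (Fintype.piFinset fun _ : Fin ℓ => Finset.range (k + 1)).filter
      (fun c => ∑ j, c j ≤ m),
    (Nat.choose (k + (m - ∑ j, c j)) (m - ∑ j, c j) : R) * γ ^ (m - ∑ j, c j) *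
      ∏ j, (Nat.choose k (c j) : R) * α j ^ c j * β j ^ (k - c j)

lemma lF_zero_left {ℓ : ℕ} (γ : R) (α β : Fin ℓ → R) (m : ℕ) :
    lF γ α β 0 m = γ ^ m := by
  unfold lF
  rw [Finset.sum_eq_single (fun _ => 0)]
  · simp
  · intro b hb hne
    exfalso; apply hne
    simp only [Finset.mem_filter, Fintype.mem_piFinset, Finset.mem_range, Nat.lt_one_iff] at hb
    funext j; simpa using hb.1 j
  · intro h; exfalso; apply h; simp [Fintype.mem_piFinset]

lemma card_le_sum {ℓ : ℕ} (S : Finset (Fin ℓ)) (c : Fin ℓ → ℕ) (h : ∀ j ∈ S, 1 ≤ c j) :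
    S.card ≤ ∑ j, c j := by
  calc S.card = ∑ j ∈ S, 1 := by simp
  _ ≤ ∑ j ∈ S, c j := Finset.sum_le_sum h
  _ ≤ ∑ j, c j := Finset.sum_le_sum_of_subset (Finset.subset_univ S)

lemma sum_ite_card {ℓ : ℕ} (S : Finset (Fin ℓ)) :
    (∑ j, if j ∈ S then 1 else 0) = S.card := by
  simp [Finset.sum_ite_mem]

lemma lF_step1 {ℓ : ℕ} (γ : R) (α β : Fin ℓ → R) (k m : ℕ) :
    lF γ α β (k+1) m =
      (∑ c ∈ (Fintype.piFinset fun _ : Fin ℓ => Finset.range (k + 1 + 1)).filter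
          (fun c => ∑ j, c j ≤ m),
        (Nat.choose (k + (m - ∑ j, c j)) (m - ∑ j, c j) : R) * γ ^ (m - ∑ j, c j) *
          ∏ j, (Nat.choose (k+1) (c j) : R) * α j ^ c j * β j ^ (k + 1 - c j))
      + (if m = 0 then 0 else γ * lF γ α β (k+1) (m-1)) := by
  cases m with
  | zero =>
    rw [if_pos rfl, add_zero]
    unfold lF
    refine Finset.sum_congr rfl fun c hc => ?_
    have hs : ∑ j, c j = 0 := Nat.le_zero.mp (Finset.mem_filter.mp hc).2
    simp [hs]
  | succ m' =>
    rw [if_neg (Nat.succ_ne_zero m'), Nat.succ_sub_one]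
    unfold lF
    have hAA : ((Fintype.piFinset fun _ : Fin ℓ => Finset.range (k + 1 + 1)).filter
          (fun c => ∑ j, c j ≤ m')) =
        (((Fintype.piFinset fun _ : Fin ℓ => Finset.range (k + 1 + 1)).filter
          (fun c => ∑ j, c j ≤ m' + 1)).filter (fun c => ∑ j, c j ≤ m')) := by
      rw [Finset.filter_filter]
      apply Finset.filter_congr
      intro c _
      constructor
      · intro h; exact ⟨Nat.le_succ_of_le h, h⟩
      · intro h; exact h.2
    rw [hAA, Finset.mul_sum,
      Finset.sum_filter (fun c : Fin ℓ → ℕ => ∑ j, c j ≤ m'), ← Finset.sum_add_distrib]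
    refine Finset.sum_congr rfl fun c hc => ?_
    have hs : ∑ j, c j ≤ m' + 1 := (Finset.mem_filter.mp hc).2
    rcases Nat.lt_or_ge (∑ j, c j) (m' + 1) with h | h
    · have h' : ∑ j, c j ≤ m' := Nat.lt_succ_iff.mp h
      rw [if_pos h']
      obtain ⟨d, hd⟩ : ∃ d, m' - ∑ j, c j = d := ⟨_, rfl⟩
      have hd1 : m' + 1 - ∑ j, c j = d + 1 := by omega
      rw [hd, hd1]
      have hnat : (k + 1 + (d + 1)).choose (d + 1)
          = (k + (d + 1)).choose (d + 1) + (k + 1 + d).choose d := by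
        have h1 : k + 1 + (d + 1) = (k + d + 1) + 1 := by ring
        have h2 : k + (d + 1) = k + d + 1 := by ring
        have h3 : k + 1 + d = k + d + 1 := by ring
        rw [h1, h2, h3, Nat.choose_succ_succ]
        simp only [Nat.succ_eq_add_one]
        omega
      rw [hnat]
      push_cast
      ring
    · have h' : ∑ j, c j = m' + 1 := le_antisymm hs h
      rw [if_neg (by omega)]
      rw [h', Nat.sub_self]
      simp

lemma inner_sum {ℓ : ℕ} (γ : R) (α β : Fin ℓ → R) (k m : ℕ) (S : Finset (Fin ℓ)) :
    (∑ c ∈ (Fintype.piFinset fun _ : Fin ℓ => Finset.range (k + 1 + 1)).filter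
        (fun c => ∑ j, c j ≤ m),
      (Nat.choose (k + (m - ∑ j, c j)) (m - ∑ j, c j) : R) * γ ^ (m - ∑ j, c j) *
        ((∏ j ∈ S, (if c j = 0 then 0 else
            (Nat.choose k (c j - 1) : R) * α j ^ c j * β j ^ (k + 1 - c j))) *
         ∏ j ∈ Finset.univ \ S, (Nat.choose k (c j) : R) * α j ^ c j * β j ^ (k + 1 - c j)))
    = if S.card ≤ m then
        ((∏ j ∈ S, α j) * ∏ j ∈ Finset.univ \ S, β j) * lF γ α β k (m - S.card) else 0 := by
  classical
  rw [← Finset.sum_filter_add_sum_filter_not _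
    (fun c => (∀ j ∈ S, 1 ≤ c j) ∧ ∀ j ∈ Finset.univ \ S, c j ≤ k)]
  have h2 : (∑ c ∈ ((Fintype.piFinset fun _ : Fin ℓ => Finset.range (k + 1 + 1)).filter
        (fun c => ∑ j, c j ≤ m)).filter
        (fun c => ¬((∀ j ∈ S, 1 ≤ c j) ∧ ∀ j ∈ Finset.univ \ S, c j ≤ k)),
      (Nat.choose (k + (m - ∑ j, c j)) (m - ∑ j, c j) : R) * γ ^ (m - ∑ j, c j) *
        ((∏ j ∈ S, (if c j = 0 then 0 else
            (Nat.choose k (c j - 1) : R) * α j ^ c j * β j ^ (k + 1 - c j))) *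
         ∏ j ∈ Finset.univ \ S, (Nat.choose k (c j) : R) * α j ^ c j * β j ^ (k + 1 - c j)))
      = 0 := by
    apply Finset.sum_eq_zero
    intro c hc
    simp only [Finset.mem_filter, not_and_or, not_forall] at hc
    rcases hc.2 with ⟨j, hj, hj1⟩ | ⟨j, hj, hj1⟩
    · have : (∏ j ∈ S, (if c j = 0 then 0 else
          (Nat.choose k (c j - 1) : R) * α j ^ c j * β j ^ (k + 1 - c j))) = 0 :=
        Finset.prod_eq_zero hj (by rw [if_pos (by omega)])
      rw [this]; ring
    · have hck : k < c j := by omega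
      have : (∏ j ∈ Finset.univ \ S, (Nat.choose k (c j) : R) * α j ^ c j
          * β j ^ (k + 1 - c j)) = 0 :=
        Finset.prod_eq_zero hj (by rw [Nat.choose_eq_zero_of_lt hck]; push_cast; ring)
      rw [this]; ring
  rw [h2, add_zero]
  by_cases hSm : S.card ≤ m
  · rw [if_pos hSm]
    unfold lF
    rw [Finset.mul_sum]
    apply Finset.sum_nbij' (fun c j => c j - if j ∈ S then 1 else 0)
      (fun c j => c j + if j ∈ S then 1 else 0)
    · -- forward membership
      intro c hc
      simp only [Finset.mem_filter, Fintype.mem_piFinset, Finset.mem_range] at hc ⊢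
      obtain ⟨⟨hpi, hsum⟩, hS, hSc⟩ := hc
      have hsum' : (∑ j, (c j - if j ∈ S then 1 else 0)) = (∑ j, c j) - S.card := by
        rw [← sum_ite_card S, ← Finset.sum_tsub_distrib]
        intro j _
        by_cases h : j ∈ S <;> simp [h, hS j]
      constructor
      · intro j
        by_cases h : j ∈ S
        · have := hpi j; simp [h]; omega
        · have := hSc j (by simp [h]); simp [h]; omega
      · rw [hsum']
        have := card_le_sum S c hS
        omega
    · -- backward membership
      intro c hc
      simp only [Finset.mem_filter, Fintype.mem_piFinset, Finset.mem_range] at hc ⊢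
      obtain ⟨hpi, hsum⟩ := hc
      have hsum' : (∑ j, (c j + if j ∈ S then 1 else 0)) = (∑ j, c j) + S.card := by
        rw [Finset.sum_add_distrib, sum_ite_card S]
      refine ⟨⟨?_, ?_⟩, ?_, ?_⟩
      · intro j
        have := hpi j
        by_cases h : j ∈ S <;> simp only [h, if_true, if_false] <;> omega
      · rw [hsum']; omega
      · intro j hj; simp [hj]
      · intro j hj; simp only [Finset.mem_sdiff] at hj; have := hpi j; simp [hj.2]; omega
    · -- left inverse
      intro c hc
      simp only [Finset.mem_filter] at hc
      funext j
      by_cases h : j ∈ S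
      · have := hc.2.1 j h; simp [h]; omega
      · simp [h]
    · -- right inverse
      intro c hc
      funext j
      by_cases h : j ∈ S <;> simp [h]
    · -- value equality
      intro c hc
      simp only [Finset.mem_filter, Fintype.mem_piFinset, Finset.mem_range] at hc
      obtain ⟨⟨hpi, hsum⟩, hS, hSc⟩ := hc
      have hsum' : (∑ j, (c j - if j ∈ S then 1 else 0)) = (∑ j, c j) - S.card := by
        rw [← sum_ite_card S, ← Finset.sum_tsub_distrib]
        intro j _
        by_cases h : j ∈ S <;> simp [h, hS j]
      have hcard := card_le_sum S c hS
      have hi : m - S.card - (∑ j, (c j - if j ∈ S then 1 else 0)) = m - ∑ j, c j := by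
        rw [hsum']; omega
      rw [hi]
      -- now product manipulation
      rw [← Finset.prod_sdiff (Finset.subset_univ S)
        (f := fun j => (Nat.choose k ((c j - if j ∈ S then 1 else 0)) : R)
          * α j ^ (c j - if j ∈ S then 1 else 0)
          * β j ^ (k - (c j - if j ∈ S then 1 else 0)))]
      have hSprod : (∏ j ∈ S, (if c j = 0 then 0 else
          (Nat.choose k (c j - 1) : R) * α j ^ c j * β j ^ (k + 1 - c j)))
          = ∏ j ∈ S, (α j * ((Nat.choose k ((c j - if j ∈ S then 1 else 0)) : R)
            * α j ^ (c j - if j ∈ S then 1 else 0)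
            * β j ^ (k - (c j - if j ∈ S then 1 else 0)))) := by
        apply Finset.prod_congr rfl
        intro j hj
        have h1 : 1 ≤ c j := hS j hj
        rw [if_neg (by omega), if_pos hj]
        have he2 : k + 1 - c j = k - (c j - 1) := by omega
        have hpow : α j ^ c j = α j ^ (c j - 1) * α j := by
          conv_lhs => rw [show c j = (c j - 1) + 1 from by omega]
          rw [pow_succ]
        rw [he2, hpow]
        ring
      have hScprod : (∏ j ∈ Finset.univ \ S, (Nat.choose k (c j) : R) * α j ^ c j
            * β j ^ (k + 1 - c j))
          = ∏ j ∈ Finset.univ \ S, (β j * ((Nat.choose k ((c j - if j ∈ S then 1 else 0)) : R)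
            * α j ^ (c j - if j ∈ S then 1 else 0)
            * β j ^ (k - (c j - if j ∈ S then 1 else 0)))) := by
        apply Finset.prod_congr rfl
        intro j hj
        simp only [Finset.mem_sdiff] at hj
        rw [if_neg hj.2, Nat.sub_zero]
        have hk : c j ≤ k := hSc j (by simp [hj.2])
        have he2 : k + 1 - c j = (k - c j) + 1 := by omega
        rw [he2, pow_succ]
        ring
      rw [hSprod, hScprod]
      simp only [Finset.prod_mul_distrib]
      ring
  · rw [if_neg hSm]
    apply Finset.sum_eq_zero
    intro c hc
    simp only [Finset.mem_filter] at hc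
    exact absurd (le_trans (card_le_sum S c hc.2.1) hc.1.2) (by omega)

lemma lF_step2 {ℓ : ℕ} (γ : R) (α β : Fin ℓ → R) (a : ℕ → R)
    (hfact : ∀ i ≤ ℓ, a i =
      ∑ S ∈ Finset.powersetCard i (Finset.univ : Finset (Fin ℓ)),
        (∏ j ∈ S, α j) * ∏ j ∈ Sᶜ, β j) (k m : ℕ) :
    (∑ c ∈ (Fintype.piFinset fun _ : Fin ℓ => Finset.range (k + 1 + 1)).filter
        (fun c => ∑ j, c j ≤ m),
      (Nat.choose (k + (m - ∑ j, c j)) (m - ∑ j, c j) : R) * γ ^ (m - ∑ j, c j) *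
        ∏ j, (Nat.choose (k+1) (c j) : R) * α j ^ c j * β j ^ (k + 1 - c j))
    = ∑ i ∈ Finset.range (ℓ + 1),
        if i ≤ m then a i * lF γ α β k (m - i) else 0 := by
  classical
  have hPascal : ∀ c : Fin ℓ → ℕ,
      (∏ j, (Nat.choose (k+1) (c j) : R) * α j ^ c j * β j ^ (k + 1 - c j))
      = ∑ S ∈ (Finset.univ : Finset (Fin ℓ)).powerset,
          (∏ j ∈ S, (if c j = 0 then 0 else
            (Nat.choose k (c j - 1) : R) * α j ^ c j * β j ^ (k + 1 - c j))) *
          ∏ j ∈ Finset.univ \ S, (Nat.choose k (c j) : R) * α j ^ c j * β j ^ (k + 1 - c j) := by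
    intro c
    rw [← Finset.prod_add]
    apply Finset.prod_congr rfl
    intro j _
    by_cases h : c j = 0
    · simp [h]
    · rw [if_neg h]
      obtain ⟨d, hd⟩ := Nat.exists_eq_succ_of_ne_zero h
      rw [hd, Nat.choose_succ_succ, Nat.succ_sub_one]
      push_cast
      ring
  calc (∑ c ∈ (Fintype.piFinset fun _ : Fin ℓ => Finset.range (k + 1 + 1)).filter
        (fun c => ∑ j, c j ≤ m),
      (Nat.choose (k + (m - ∑ j, c j)) (m - ∑ j, c j) : R) * γ ^ (m - ∑ j, c j) *
        ∏ j, (Nat.choose (k+1) (c j) : R) * α j ^ c j * β j ^ (k + 1 - c j))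
      = ∑ S ∈ (Finset.univ : Finset (Fin ℓ)).powerset,
          ∑ c ∈ (Fintype.piFinset fun _ : Fin ℓ => Finset.range (k + 1 + 1)).filter
            (fun c => ∑ j, c j ≤ m),
          (Nat.choose (k + (m - ∑ j, c j)) (m - ∑ j, c j) : R) * γ ^ (m - ∑ j, c j) *
            ((∏ j ∈ S, (if c j = 0 then 0 else
              (Nat.choose k (c j - 1) : R) * α j ^ c j * β j ^ (k + 1 - c j))) *
            ∏ j ∈ Finset.univ \ S, (Nat.choose k (c j) : R) * α j ^ c j * β j ^ (k + 1 - c j)) := by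
        rw [Finset.sum_comm]
        apply Finset.sum_congr rfl
        intro c _
        rw [hPascal c, Finset.mul_sum]
    _ = ∑ S ∈ (Finset.univ : Finset (Fin ℓ)).powerset,
          if S.card ≤ m then
            ((∏ j ∈ S, α j) * ∏ j ∈ Finset.univ \ S, β j) * lF γ α β k (m - S.card) else 0 := by
        apply Finset.sum_congr rfl
        intro S _
        exact inner_sum γ α β k m S
    _ = ∑ i ∈ Finset.range (ℓ + 1),
        if i ≤ m then a i * lF γ α β k (m - i) else 0 := by
        rw [Finset.sum_powerset]
        rw [Finset.card_univ, Fintype.card_fin]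
        apply Finset.sum_congr rfl
        intro i hi
        have hil : i ≤ ℓ := by
          simp only [Finset.mem_range] at hi; omega
        by_cases him : i ≤ m
        · rw [if_pos him, hfact i hil, Finset.sum_mul]
          apply Finset.sum_congr rfl
          intro S hS
          have hcard : S.card = i := (Finset.mem_powersetCard.mp hS).2
          rw [hcard, if_pos him, Finset.compl_eq_univ_sdiff]
        · rw [if_neg him]
          apply Finset.sum_eq_zero
          intro S hS
          have hcard : S.card = i := (Finset.mem_powersetCard.mp hS).2
          rw [hcard, if_neg him]

lemma lF_rec {ℓ : ℕ} (γ : R) (α β : Fin ℓ → R) (a : ℕ → R)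
    (hfact : ∀ i ≤ ℓ, a i =
      ∑ S ∈ Finset.powersetCard i (Finset.univ : Finset (Fin ℓ)),
        (∏ j ∈ S, α j) * ∏ j ∈ Sᶜ, β j) (k m : ℕ) :
    lF γ α β (k+1) m =
      (∑ i ∈ Finset.range (ℓ + 1), if i ≤ m then a i * lF γ α β k (m - i) else 0)
      + (if m = 0 then 0 else γ * lF γ α β (k+1) (m-1)) := by
  rw [lF_step1, lF_step2 γ α β a hfact]

lemma main {ℓ : ℕ} (t : ℕ) (γ : R) (α β : Fin ℓ → R) (a : ℕ → R)
    (hfact : ∀ i ≤ ℓ, a i =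
      ∑ S ∈ Finset.powersetCard i (Finset.univ : Finset (Fin ℓ)),
        (∏ j ∈ S, α j) * ∏ j ∈ Sᶜ, β j) :
    ∀ k n, (n < t * k → latticeM t ℓ (fun _ i => a i) (fun _ => γ) n k = 0) ∧
      (t * k ≤ n → latticeM t ℓ (fun _ i => a i) (fun _ => γ) n k
        = lF γ α β k (n - t * k)) := by
  intro k
  induction k with
  | zero =>
    intro n
    constructor
    · intro h; omega
    · intro _
      rw [latticeM, lF_zero_left]
      simp [Nat.mul_zero]
  | succ k IHk =>
    intro n
    induction n with
    | zero =>
      by_cases ht : t = 0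
      · subst ht
        constructor
        · intro h; omega
        · intro _
          rw [latticeM, if_pos rfl]
          rw [(IHk 0).2 (by omega)]
          have e1 : (0:ℕ) - 0 * (k+1) = 0 := by omega
          have e2 : (0:ℕ) - 0 * k = 0 := by omega
          rw [e1, e2, lF_rec γ α β a hfact]
          rw [if_pos rfl, add_zero]
          rw [Finset.sum_eq_single_of_mem 0 (Finset.mem_range.mpr (by omega))]
          · rw [if_pos (by omega)]
          · intro i _ hi
            rw [if_neg (by omega)]
      · constructor
        · intro _
          rw [latticeM, if_neg ht]
        · intro h
          exfalso
          rcases Nat.mul_eq_zero.mp (Nat.le_zero.mp h) with h' | h' <;> omega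
    | succ n IHn =>
      have hmul : t * (k + 1) = t * k + t := by ring
      by_cases hB : t * (k + 1) ≤ n + 1
      · have ht_le : t ≤ n + 1 := by omega
        constructor
        · intro h; omega
        · intro _
          rw [latticeM, if_neg (by omega)]
          rw [lF_rec γ α β a hfact]
          congr 1
          · apply Finset.sum_congr rfl
            intro i _
            by_cases him : i ≤ n + 1 - t * (k + 1)
            · rw [if_pos (by omega), if_pos him]
              rw [(IHk (n + 1 - t - i)).2 (by omega)]
              congr 2
              omega
            · by_cases hti : t + i ≤ n + 1
              · rw [if_pos hti, if_neg him]
                rw [(IHk (n + 1 - t - i)).1 (by omega)]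
                ring
              · rw [if_neg hti, if_neg him]
          · by_cases hm : n + 1 - t * (k + 1) = 0
            · rw [if_pos hm]
              rw [IHn.1 (by omega)]
              ring
            · rw [if_neg hm]
              rw [IHn.2 (by omega)]
              congr 2
              omega
      · constructor
        · intro _
          rw [latticeM]
          by_cases hnt : n + 1 < t
          · rw [if_pos hnt]
          · rw [if_neg hnt]
            have h1 : (∑ i ∈ Finset.range (ℓ + 1),
                if t + i ≤ n + 1 then
                  a i * latticeM t ℓ (fun _ i => a i) (fun _ => γ) (n + 1 - t - i) k
                else 0) = 0 := by
              apply Finset.sum_eq_zero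
              intro i _
              by_cases hti : t + i ≤ n + 1
              · rw [if_pos hti, (IHk (n + 1 - t - i)).1 (by omega)]
                ring
              · rw [if_neg hti]
            rw [h1, IHn.1 (by omega)]
            ring
        · intro h; omega

end LatticeAux

/-- **Theorem (explicit formula for `M`).**  Suppose the height-independent
step weights factor linearly:
`a i = Σ_{S ⊆ Fin ℓ, |S| = i} (∏_{j ∈ S} α j) · (∏_{j ∉ S} β j)` for
`0 ≤ i ≤ ℓ`.  Then `M n k = 0` for `n < t·k`, and for `n ≥ t·k`,
`M n k = Σ_{c : Fin ℓ → ℕ, c j ≤ k, Σ c j ≤ n - t·k}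
  C(k+i, i) γ^i ∏_j C(k, c j) (α j)^(c j) (β j)^(k - c j)` where
`i = n - t·k - Σ_j c j`. -/
theorem latticeM_explicit_formula {R : Type*} [CommRing R] (t ℓ : ℕ)
    (a : ℕ → R) (γ : R) (α β : Fin ℓ → R)
    (hfact : ∀ i ≤ ℓ, a i =
      ∑ S ∈ Finset.powersetCard i (Finset.univ : Finset (Fin ℓ)),
        (∏ j ∈ S, α j) * ∏ j ∈ Sᶜ, β j)
    (n k : ℕ) :
    (n < t * k → latticeM t ℓ (fun _ i => a i) (fun _ => γ) n k = 0) ∧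
      (t * k ≤ n → latticeM t ℓ (fun _ i => a i) (fun _ => γ) n k =
        ∑ c ∈ (Fintype.piFinset fun _ : Fin ℓ => Finset.range (k + 1)).filter
            (fun c => ∑ j, c j ≤ n - t * k),
          (Nat.choose (k + (n - t * k - ∑ j, c j)) (n - t * k - ∑ j, c j) : R) *
              γ ^ (n - t * k - ∑ j, c j) *
            ∏ j, (Nat.choose k (c j) : R) * α j ^ c j * β j ^ (k - c j)) := by
  constructor
  · exact (LatticeAux.main t γ α β a hfact k n).1
  · intro h
    rw [(LatticeAux.main t γ α β a hfact k n).2 h]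
    rfl
end

section
/- Proposition (second recurrence relation). For all n ≥ t and k ≥ 1, M n k = Σ_{j=0}^{ℓ} ( Σ_{m=0}^{j} a (n−m) (j−m) · ∏_{i=0}^{m−1} b (n−i) ) · M (n−t−j) (k−1) + Σ_{j=0}^{n} ( Σ_{m=0}^{ℓ} a (n−j−m−1) (ℓ−m) · ∏_{i=0}^{j+m} b (n−i) ) · M (n−t−ℓ−j−1) (k−1), where the empty product ∏_{i=0}^{−1} b (n−i) equals 1, and any summand whose M-index would be negative is taken to be 0 (in all remaining summands every index of a and b is nonnegative). -/
open Finset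

section AuxLemmas

variable {R : Type*} [CommRing R] (t ℓ : ℕ) (a : ℕ → ℕ → R) (b : ℕ → R)

lemma latticeM_zero_of_lt (n k : ℕ) (h : n < t) : latticeM t ℓ a b n (k+1) = 0 := by
  cases n with
  | zero => rw [latticeM, if_neg (by omega)]
  | succ m => rw [latticeM, if_pos h]

lemma latticeM_prod_shift (n m : ℕ) :
    ∏ i ∈ Finset.range (m+1), b (n+1-i) = b (n+1) * ∏ i ∈ Finset.range m, b (n-i) := by
  rw [Finset.prod_range_succ']
  simp [mul_comm, Nat.succ_sub_succ]

lemma latticeM_aux (k : ℕ) : ∀ n, t ≤ n → latticeM t ℓ a b n (k+1) =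
    (∑ j ∈ Finset.range (ℓ + 1),
        if t + j ≤ n then
          (∑ m ∈ Finset.range (j + 1),
              a (n - m) (j - m) * ∏ i ∈ Finset.range m, b (n - i)) *
            latticeM t ℓ a b (n - t - j) k
        else 0) +
      ∑ j ∈ Finset.range (n + 1),
        if t + ℓ + j + 1 ≤ n then
          (∑ m ∈ Finset.range (ℓ + 1),
              a (n - j - m - 1) (ℓ - m) * ∏ i ∈ Finset.range (j + m + 1), b (n - i)) *
            latticeM t ℓ a b (n - t - ℓ - j - 1) k
        else 0 := by
  intro n hn
  induction n, hn using Nat.le_induction with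
  | base =>
    have h2 : ∀ j ∈ Finset.range (t+1), (if t + ℓ + j + 1 ≤ t then
            (∑ m ∈ Finset.range (ℓ + 1),
                a (t - j - m - 1) (ℓ - m) * ∏ i ∈ Finset.range (j + m + 1), b (t - i)) *
              latticeM t ℓ a b (t - t - ℓ - j - 1) k
          else 0) = 0 := fun j _ => if_neg (by omega)
    rw [Finset.sum_congr rfl h2, Finset.sum_const_zero, add_zero,
      Finset.sum_eq_single 0 (fun j _ hj => if_neg (by omega)) (by simp)]
    simp only [if_pos (by omega : t + 0 ≤ t), Finset.sum_range_one, Finset.prod_range_zero,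
      Nat.sub_zero, Nat.sub_self, mul_one]
    cases t with
    | zero => rw [latticeM, if_pos rfl]; simp
    | succ s =>
      rw [latticeM, if_neg (by omega), latticeM_zero_of_lt (s+1) ℓ a b s k (by omega), mul_zero,
        add_zero, Finset.sum_eq_single 0 (fun j _ hj => if_neg (by omega)) (by simp)]
      rw [if_pos (by omega)]
      simp
  | succ n hn ih =>
    rw [latticeM, if_neg (by omega), ih]
    have e1 :
        (∑ j ∈ Finset.range (ℓ + 1),
            if t + j ≤ n + 1 then
              (∑ m ∈ Finset.range (j + 1),
                  a (n + 1 - m) (j - m) * ∏ i ∈ Finset.range m, b (n + 1 - i)) *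
                latticeM t ℓ a b (n + 1 - t - j) k
            else 0) =
          (∑ i ∈ Finset.range (ℓ + 1),
              if t + i ≤ n + 1 then a (n + 1) i * latticeM t ℓ a b (n + 1 - t - i) k else 0) +
            b (n + 1) * ∑ j ∈ Finset.range ℓ,
              (if t + j ≤ n then
                (∑ m ∈ Finset.range (j + 1),
                    a (n - m) (j - m) * ∏ i ∈ Finset.range m, b (n - i)) *
                  latticeM t ℓ a b (n - t - j) k
              else 0) := by
      have step1 : ∀ j ∈ Finset.range (ℓ + 1),
          (if t + j ≤ n + 1 then
              (∑ m ∈ Finset.range (j + 1),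
                  a (n + 1 - m) (j - m) * ∏ i ∈ Finset.range m, b (n + 1 - i)) *
                latticeM t ℓ a b (n + 1 - t - j) k
            else 0) =
          (if t + j ≤ n + 1 then a (n + 1) j * latticeM t ℓ a b (n + 1 - t - j) k else 0) +
          (if t + j ≤ n + 1 then
              b (n + 1) * ((∑ m ∈ Finset.range j,
                  a (n - m) (j - (m + 1)) * ∏ i ∈ Finset.range m, b (n - i)) *
                latticeM t ℓ a b (n + 1 - t - j) k)
            else 0) := by
        intro j _
        split_ifs with h
        · rw [Finset.sum_range_succ']
          simp only [Nat.succ_sub_succ, Nat.sub_zero, Finset.prod_range_zero, mul_one,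
            latticeM_prod_shift]
          rw [add_mul, add_comm, Finset.sum_mul, Finset.sum_mul, Finset.mul_sum]
          congr 1
          exact Finset.sum_congr rfl fun m _ => by ring
        · rw [add_zero]
      rw [Finset.sum_congr rfl step1, Finset.sum_add_distrib]
      congr 1
      rw [Finset.sum_range_succ']
      have last0 : (if t + 0 ≤ n + 1 then
          b (n + 1) * ((∑ m ∈ Finset.range 0,
              a (n - m) (0 - (m + 1)) * ∏ i ∈ Finset.range m, b (n - i)) *
            latticeM t ℓ a b (n + 1 - t - 0) k)
          else 0) = 0 := by simp
      rw [last0, add_zero, Finset.mul_sum]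
      refine Finset.sum_congr rfl fun j hj => ?_
      have hc : (t + (j + 1) ≤ n + 1) ↔ (t + j ≤ n) := by omega
      have hM : n + 1 - t - (j + 1) = n - t - j := by omega
      rw [hM]
      simp only [hc, Nat.succ_sub_succ, mul_ite, mul_zero]
    have e2 :
        (∑ j ∈ Finset.range (n + 1 + 1),
            if t + ℓ + j + 1 ≤ n + 1 then
              (∑ m ∈ Finset.range (ℓ + 1),
                  a (n + 1 - j - m - 1) (ℓ - m) *
                    ∏ i ∈ Finset.range (j + m + 1), b (n + 1 - i)) *
                latticeM t ℓ a b (n + 1 - t - ℓ - j - 1) k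
            else 0) =
          (b (n + 1) * ∑ j ∈ Finset.range (n + 1),
              (if t + ℓ + j + 1 ≤ n then
                (∑ m ∈ Finset.range (ℓ + 1),
                    a (n - j - m - 1) (ℓ - m) * ∏ i ∈ Finset.range (j + m + 1), b (n - i)) *
                  latticeM t ℓ a b (n - t - ℓ - j - 1) k
              else 0)) +
            b (n + 1) * (if t + ℓ ≤ n then
                (∑ m ∈ Finset.range (ℓ + 1),
                    a (n - m) (ℓ - m) * ∏ i ∈ Finset.range m, b (n - i)) *
                  latticeM t ℓ a b (n - t - ℓ) k
              else 0) := by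
      rw [Finset.sum_range_succ']
      congr 1
      · rw [Finset.mul_sum]
        refine Finset.sum_congr rfl fun j hj => ?_
        have hc : (t + ℓ + (j + 1) + 1 ≤ n + 1) ↔ (t + ℓ + j + 1 ≤ n) := by omega
        have hM : n + 1 - t - ℓ - (j + 1) - 1 = n - t - ℓ - j - 1 := by omega
        rw [hM]
        simp only [hc, mul_ite, mul_zero]
        split_ifs with h
        · rw [Finset.sum_mul, Finset.sum_mul, Finset.mul_sum]
          refine Finset.sum_congr rfl fun m hm => ?_
          have h1 : n + 1 - (j + 1) - m - 1 = n - j - m - 1 := by omega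
          have h2 : j + 1 + m + 1 = j + m + 1 + 1 := by omega
          rw [h1, h2, latticeM_prod_shift]
          ring
        · rfl
      · have hc : (t + ℓ + 0 + 1 ≤ n + 1) ↔ (t + ℓ ≤ n) := by omega
        have hM : n + 1 - t - ℓ - 0 - 1 = n - t - ℓ := by omega
        rw [hM]
        simp only [hc, mul_ite, mul_zero]
        split_ifs with h
        · rw [Finset.sum_mul, Finset.sum_mul, Finset.mul_sum]
          refine Finset.sum_congr rfl fun m hm => ?_
          have h1 : n + 1 - 0 - m - 1 = n - m := by omega
          have h2 : 0 + m + 1 = m + 1 := by omega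
          rw [h1, h2, latticeM_prod_shift]
          ring
        · rfl
    have e3 := Finset.sum_range_succ
        (fun j => if t + j ≤ n then
              (∑ m ∈ Finset.range (j + 1),
                  a (n - m) (j - m) * ∏ i ∈ Finset.range m, b (n - i)) *
                latticeM t ℓ a b (n - t - j) k
            else 0) ℓ
    rw [e1, e2, e3]
    ring

end AuxLemmas

/-- **Proposition (second recurrence relation).**  For `n ≥ t` and `k ≥ 1`,
`M n k = Σ_{j=0}^{ℓ} (Σ_{m=0}^{j} a (n-m) (j-m) · ∏_{i=0}^{m-1} b (n-i)) · M (n-t-j) (k-1)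
       + Σ_{j=0}^{n} (Σ_{m=0}^{ℓ} a (n-j-m-1) (ℓ-m) · ∏_{i=0}^{j+m} b (n-i)) · M (n-t-ℓ-j-1) (k-1)`,
where summands whose `M`-index would be negative vanish. -/
theorem latticeM_second_recurrence {R : Type*} [CommRing R] (t ℓ : ℕ)
    (a : ℕ → ℕ → R) (b : ℕ → R) (n k : ℕ) (hn : t ≤ n) (hk : 1 ≤ k) :
    latticeM t ℓ a b n k =
      (∑ j ∈ Finset.range (ℓ + 1),
          if t + j ≤ n then
            (∑ m ∈ Finset.range (j + 1),
                a (n - m) (j - m) * ∏ i ∈ Finset.range m, b (n - i)) *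
              latticeM t ℓ a b (n - t - j) (k - 1)
          else 0) +
        ∑ j ∈ Finset.range (n + 1),
          if t + ℓ + j + 1 ≤ n then
            (∑ m ∈ Finset.range (ℓ + 1),
                a (n - j - m - 1) (ℓ - m) * ∏ i ∈ Finset.range (j + m + 1), b (n - i)) *
              latticeM t ℓ a b (n - t - ℓ - j - 1) (k - 1)
          else 0 := by
  cases k with
  | zero => omega
  | succ k => simpa using latticeM_aux t ℓ a b k n hn
end
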